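/- Let R = (ZMod 2)[y_1,…,y_n] and let I be the ideal generated by the elements y_i^2 - Σ_{j=1}^{i-1} c_{j,i} y_i y_j for 1 ≤ i ≤ n, where c_{j,i} ∈ ZMod 2. Then R/I is a free module over ZMod 2 with basis the square-free monomials y_{i_1}⋯y_{i_k}, i_1 < ⋯ < i_k (including the empty monomial 1); in particular R/I has dimension 2^n over ZMod 2. -/

import Mathlib

set_option maxHeartbeats 1000000
set_option synthInstance.maxHeartbeats 1000000


open MvPolynomial

/-- The ideal `I = (y_i² - ∑_{j<i} c_{j,i} y_i y_j : 1 ≤ i ≤ n)` in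
`(ℤ/2)[y_1, …, y_n]` defining the mod-2 cohomology of a real Bott tower. -/
noncomputable def bottIdeal (n : ℕ) (c : Fin n → Fin n → ZMod 2) :
    Ideal (MvPolynomial (Fin n) (ZMod 2)) :=
  Ideal.span {p | ∃ i : Fin n,
    p = X i ^ 2 - ∑ j ∈ Finset.univ.filter (fun j => j < i), C (c j i) * (X i * X j)}

namespace BottAux

noncomputable def Yop (n : ℕ) (c : Fin n → Fin n → ZMod 2) :
    ℕ → ((Finset (Fin n) →₀ ZMod 2) →ₗ[ZMod 2] (Finset (Fin n) →₀ ZMod 2))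
  | k =>
    Finsupp.lsum (ZMod 2) fun S => LinearMap.toSpanSingleton (ZMod 2) _
      (if h : k < n then
        (if (⟨k, h⟩ : Fin n) ∈ S then
          ∑ j ∈ (Finset.univ.filter (fun j : Fin n => j < (⟨k, h⟩ : Fin n))).attach,
            c j.1 ⟨k, h⟩ • Yop n c j.1.val (Finsupp.single S 1)
        else Finsupp.single (insert (⟨k, h⟩ : Fin n) S) 1)
      else 0)
  decreasing_by
    · have hj := j.2
      simp only [Finset.mem_filter, Fin.lt_def] at hj
      exact hj.2

noncomputable def Y (n : ℕ) (c : Fin n → Fin n → ZMod 2) (i : Fin n) :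
    (Finset (Fin n) →₀ ZMod 2) →ₗ[ZMod 2] (Finset (Fin n) →₀ ZMod 2) :=
  Yop n c i.val

lemma Y_e (n : ℕ) (c : Fin n → Fin n → ZMod 2) (i : Fin n) (S : Finset (Fin n)) :
    Y n c i (Finsupp.single S 1) =
      if i ∈ S then
        ∑ j ∈ Finset.univ.filter (fun j => j < i), c j i • Y n c j (Finsupp.single S 1)
      else Finsupp.single (insert i S) 1 := by
  rw [Y, Yop]
  rw [Finsupp.lsum_single, LinearMap.toSpanSingleton_apply, one_smul, dif_pos i.isLt]
  simp only [Fin.eta]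
  split
  · exact Finset.sum_attach _ (fun j => c j i • Y n c j (Finsupp.single S 1))
  · rfl

lemma Y_comm_e (n : ℕ) (c : Fin n → Fin n → ZMod 2) :
    ∀ N (i k : Fin n) (S : Finset (Fin n)), i.val + k.val ≤ N →
      Y n c i (Y n c k (Finsupp.single S 1)) = Y n c k (Y n c i (Finsupp.single S 1)) := by
  intro N
  induction N with
  | zero =>
    intro i k S h
    have : i = k := Fin.ext (by omega)
    rw [this]
  | succ N IH =>
    intro i k S hN
    by_cases hik : i = k
    · rw [hik]
    -- key expansion using IH
    have key : ∀ (a b : Fin n), b ∈ S → a.val + b.val ≤ N + 1 →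
        Y n c a (Y n c b (Finsupp.single S 1)) =
          ∑ l ∈ Finset.univ.filter (fun l => l < b),
            c l b • Y n c l (Y n c a (Finsupp.single S 1)) := by
      intro a b hb hab
      rw [Y_e n c b S, if_pos hb, map_sum]
      refine Finset.sum_congr rfl fun l hl => ?_
      have hlb : l < b := (Finset.mem_filter.mp hl).2
      rw [map_smul, IH a l S (by have := hlb; rw [Fin.lt_def] at this; omega)]
    have aux : ∀ (a b : Fin n), a ≠ b → a ∈ S → b ∉ S → a.val + b.val ≤ N + 1 →
        Y n c a (Y n c b (Finsupp.single S 1)) = Y n c b (Y n c a (Finsupp.single S 1)) := by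
      intro a b hne ha hb hab
      rw [Y_e n c b S, if_neg hb]
      rw [Y_e n c a (insert b S), if_pos (Finset.mem_insert_of_mem ha)]
      rw [Y_e n c a S, if_pos ha, map_sum]
      refine Finset.sum_congr rfl fun j hj => ?_
      have hja : j < a := (Finset.mem_filter.mp hj).2
      rw [map_smul]
      congr 1
      rw [IH b j S (by have := hja; rw [Fin.lt_def] at this; omega)]
      rw [Y_e n c b S, if_neg hb]
    by_cases hi : i ∈ S <;> by_cases hk : k ∈ S
    · -- both in S
      rw [key i k hk hN, key k i hi (by omega)]
      have e1 : (∑ l ∈ Finset.univ.filter (fun l => l < k),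
            c l k • Y n c l (Y n c i (Finsupp.single S 1)))
          = ∑ l ∈ Finset.univ.filter (fun l => l < k),
              ∑ j ∈ Finset.univ.filter (fun j => j < i),
                c l k • (c j i • Y n c j (Y n c l (Finsupp.single S 1))) := by
        refine Finset.sum_congr rfl fun l hl => ?_
        have hlk : l.val < k.val := Fin.lt_def.mp (Finset.mem_filter.mp hl).2
        rw [key l i hi (by omega), Finset.smul_sum]
      have e2 : (∑ j ∈ Finset.univ.filter (fun j => j < i),
            c j i • Y n c j (Y n c k (Finsupp.single S 1)))
          = ∑ j ∈ Finset.univ.filter (fun j => j < i),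
              ∑ l ∈ Finset.univ.filter (fun l => l < k),
                c j i • (c l k • Y n c j (Y n c l (Finsupp.single S 1))) := by
        refine Finset.sum_congr rfl fun j hj => ?_
        have hji : j.val < i.val := Fin.lt_def.mp (Finset.mem_filter.mp hj).2
        rw [key j k hk (by omega), Finset.smul_sum]
        refine Finset.sum_congr rfl fun l hl => ?_
        have hlk : l.val < k.val := Fin.lt_def.mp (Finset.mem_filter.mp hl).2
        rw [IH l j S (by omega)]
      rw [e1, e2, Finset.sum_comm]
      exact Finset.sum_congr rfl fun j _ => Finset.sum_congr rfl fun l _ => smul_comm _ _ _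
    · exact aux i k hik hi hk hN
    · exact (aux k i (Ne.symm hik) hk hi (by omega)).symm
    · rw [Y_e n c k S, if_neg hk, Y_e n c i S, if_neg hi]
      rw [Y_e n c i (insert k S), if_neg (by simp [hik, hi])]
      rw [Y_e n c k (insert i S), if_neg (by simp [Ne.symm hik, hk])]
      rw [Finset.insert_comm]

lemma Y_comm' (n : ℕ) (c : Fin n → Fin n → ZMod 2) (i k : Fin n) :
    Y n c i ∘ₗ Y n c k = Y n c k ∘ₗ Y n c i := by
  refine Finsupp.lhom_ext fun S b => ?_
  have hb : (Finsupp.single S b : Finset (Fin n) →₀ ZMod 2) = b • Finsupp.single S 1 := by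
    rw [Finsupp.smul_single, smul_eq_mul, mul_one]
  simp only [LinearMap.comp_apply, hb, map_smul]
  rw [Y_comm_e n c (i.val + k.val) i k S le_rfl]

lemma Y_rel_e (n : ℕ) (c : Fin n → Fin n → ZMod 2) (i : Fin n) (S : Finset (Fin n)) :
    Y n c i (Y n c i (Finsupp.single S 1)) =
      ∑ j ∈ Finset.univ.filter (fun j => j < i),
        c j i • Y n c i (Y n c j (Finsupp.single S 1)) := by
  by_cases hi : i ∈ S
  · conv_lhs => rw [Y_e n c i S, if_pos hi]
    simp only [map_sum, map_smul]
  · conv_lhs => rw [Y_e n c i S, if_neg hi]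
    rw [Y_e n c i (insert i S), if_pos (Finset.mem_insert_self i S)]
    refine Finset.sum_congr rfl fun j hj => ?_
    congr 1
    rw [Y_comm_e n c (i.val + j.val) i j S le_rfl]
    rw [Y_e n c i S, if_neg hi]

lemma Y_rel (n : ℕ) (c : Fin n → Fin n → ZMod 2) (i : Fin n) :
    Y n c i ∘ₗ Y n c i =
      ∑ j ∈ Finset.univ.filter (fun j => j < i), c j i • (Y n c i ∘ₗ Y n c j) := by
  refine Finsupp.lhom_ext fun S b => ?_
  have hb : (Finsupp.single S b : Finset (Fin n) →₀ ZMod 2) = b • Finsupp.single S 1 := by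
    rw [Finsupp.smul_single, smul_eq_mul, mul_one]
  simp only [LinearMap.comp_apply, LinearMap.sum_apply, LinearMap.smul_apply, hb, map_smul]
  rw [Y_rel_e n c i S, Finset.smul_sum]

noncomputable def Tsub (n : ℕ) (c : Fin n → Fin n → ZMod 2) :
    Subalgebra (ZMod 2) (Module.End (ZMod 2) (Finset (Fin n) →₀ ZMod 2)) :=
  Algebra.adjoin (ZMod 2) (Set.range (Y n c))

noncomputable instance (n : ℕ) (c : Fin n → Fin n → ZMod 2) : CommSemiring (Tsub n c) :=
  { (Tsub n c).toSemiring with mul_comm := (Algebra.isMulCommutative_adjoin (ZMod 2) (by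
    rintro _ ⟨i, rfl⟩ _ ⟨k, rfl⟩
    show Y n c i * Y n c k = Y n c k * Y n c i
    rw [Module.End.mul_eq_comp, Module.End.mul_eq_comp, Y_comm'])).is_comm.comm }

noncomputable def Ytil (n : ℕ) (c : Fin n → Fin n → ZMod 2) (i : Fin n) : Tsub n c :=
  ⟨Y n c i, Algebra.subset_adjoin (Set.mem_range_self i)⟩

noncomputable def Φ (n : ℕ) (c : Fin n → Fin n → ZMod 2) :
    MvPolynomial (Fin n) (ZMod 2) →ₐ[ZMod 2] Tsub n c :=
  aeval (Ytil n c)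

lemma Φ_gen (n : ℕ) (c : Fin n → Fin n → ZMod 2) (i : Fin n) :
    Φ n c (X i ^ 2 - ∑ j ∈ Finset.univ.filter (fun j => j < i), C (c j i) * (X i * X j)) = 0 := by
  rw [CharTwo.sub_eq_add, map_add]
  have h1 : Φ n c (X i ^ 2 : MvPolynomial (Fin n) (ZMod 2))
      = Φ n c (∑ j ∈ Finset.univ.filter (fun j => j < i), C (c j i) * (X i * X j)) := by
    have h : ∀ j : Fin n, (C (c j i) * (X i * X j) : MvPolynomial (Fin n) (ZMod 2))
        = c j i • (X i * X j) := by
      intro j; rw [smul_eq_C_mul]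
    simp only [map_pow, map_sum, h, map_smul, map_mul, Φ, aeval_X]
    apply Subtype.ext
    push_cast
    show (Y n c i) ^ 2 = ∑ j ∈ Finset.univ.filter (fun j => j < i),
      c j i • (Y n c i * Y n c j)
    rw [pow_two, Module.End.mul_eq_comp, Y_rel]
    exact Finset.sum_congr rfl fun j _ => by rw [Module.End.mul_eq_comp]
  rw [h1, ← two_smul (ZMod 2)]
  rw [show (2 : ZMod 2) = 0 by decide, zero_smul]

lemma bottIdeal_le_ker (n : ℕ) (c : Fin n → Fin n → ZMod 2) :
    bottIdeal n c ≤ RingHom.ker (Φ n c : MvPolynomial (Fin n) (ZMod 2) →+* Tsub n c) := by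
  rw [bottIdeal, Ideal.span_le]
  rintro p ⟨i, rfl⟩
  exact Φ_gen n c i

noncomputable def Φbar (n : ℕ) (c : Fin n → Fin n → ZMod 2) :
    (MvPolynomial (Fin n) (ZMod 2) ⧸ bottIdeal n c) →ₐ[ZMod 2] Tsub n c :=
  Ideal.Quotient.liftₐ (bottIdeal n c) (Φ n c) (fun a ha => RingHom.mem_ker.mp (bottIdeal_le_ker n c ha))

noncomputable def ψ (n : ℕ) (c : Fin n → Fin n → ZMod 2) :
    (MvPolynomial (Fin n) (ZMod 2) ⧸ bottIdeal n c) →ₗ[ZMod 2] (Finset (Fin n) →₀ ZMod 2) :=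
  (LinearMap.applyₗ (Finsupp.single ∅ 1)) ∘ₗ
    (Subalgebra.val (Tsub n c)).toLinearMap ∘ₗ (Φbar n c).toLinearMap

lemma prod_apply (n : ℕ) (c : Fin n → Fin n → ZMod 2) (S T : Finset (Fin n)) :
    Disjoint S T →
    ((∏ i ∈ S, Ytil n c i : Tsub n c) : Module.End (ZMod 2) (Finset (Fin n) →₀ ZMod 2))
        (Finsupp.single T 1) = Finsupp.single (S ∪ T) 1 := by
  classical
  induction S using Finset.induction_on with
  | empty => intro _; simp
  | insert _ _ ha ih =>
    rename_i a s
    intro hd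
    rw [Finset.prod_insert ha]
    push_cast
    rw [Module.End.mul_apply, ih (hd.mono_left (Finset.subset_insert a s))]
    show Y n c a (Finsupp.single (s ∪ T) 1) = _
    have hat : a ∉ s ∪ T := by
      simp only [Finset.mem_union]
      rintro (h | h)
      · exact ha h
      · exact (Finset.disjoint_left.mp hd (Finset.mem_insert_self a s)) h
    rw [Y_e, if_neg hat, Finset.insert_union]

lemma psi_prod (n : ℕ) (c : Fin n → Fin n → ZMod 2) (S : Finset (Fin n)) :
    ψ n c (Ideal.Quotient.mk (bottIdeal n c) (∏ i ∈ S, X i)) = Finsupp.single S 1 := by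
  have h : Φbar n c (Ideal.Quotient.mk (bottIdeal n c) (∏ i ∈ S, X i))
      = ∏ i ∈ S, Ytil n c i := by
    rw [Φbar, Ideal.Quotient.liftₐ_apply]
    show Φ n c (∏ i ∈ S, X i) = _
    rw [map_prod]
    exact Finset.prod_congr rfl fun i _ => aeval_X _ i
  simp only [ψ, LinearMap.comp_apply, AlgHom.toLinearMap_apply, Subalgebra.coe_val]
  rw [h]
  show ((∏ i ∈ S, Ytil n c i : Tsub n c) : Module.End (ZMod 2) (Finset (Fin n) →₀ ZMod 2))
    (Finsupp.single ∅ 1) = _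
  rw [prod_apply n c S ∅ (Finset.disjoint_empty_right S), Finset.union_empty]

noncomputable def v (n : ℕ) (c : Fin n → Fin n → ZMod 2) (S : Finset (Fin n)) :
    MvPolynomial (Fin n) (ZMod 2) ⧸ bottIdeal n c :=
  Ideal.Quotient.mk (bottIdeal n c) (∏ i ∈ S, X i)

lemma indep (n : ℕ) (c : Fin n → Fin n → ZMod 2) : LinearIndependent (ZMod 2) (v n c) := by
  apply LinearIndependent.of_comp (ψ n c)
  have h : (⇑(ψ n c) ∘ v n c) = fun S => Finsupp.single S 1 :=
    funext fun S => psi_prod n c S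
  rw [h]
  simpa using (Finsupp.basisSingleOne (R := ZMod 2) (ι := Finset (Fin n))).linearIndependent

/-- measure used for termination of the monomial reduction -/
def measure (n : ℕ) (d : Fin n →₀ ℕ) : ℕ := d.sum fun i k => k * (n + 1) ^ (i : ℕ)

lemma measure_add (n : ℕ) (a b : Fin n →₀ ℕ) :
    measure n (a + b) = measure n a + measure n b :=
  Finsupp.sum_add_index' (by simp) (by intros; rw [add_mul])

lemma measure_single (n : ℕ) (i : Fin n) (k : ℕ) :
    measure n (Finsupp.single i k) = k * (n + 1) ^ (i : ℕ) :=
  Finsupp.sum_single_index (by simp)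

lemma mono_mem (n : ℕ) (c : Fin n → Fin n → ZMod 2) :
    ∀ N (d : Fin n →₀ ℕ), measure n d ≤ N →
      Ideal.Quotient.mk (bottIdeal n c) (monomial d 1) ∈
        Submodule.span (ZMod 2) (Set.range (v n c)) := by
  intro N
  induction N using Nat.strong_induction_on with
  | _ N IH =>
  intro d hd
  by_cases hsq : ∀ i, d i ≤ 1
  · have hmono : (monomial d 1 : MvPolynomial (Fin n) (ZMod 2)) = ∏ i ∈ d.support, X i := by
      rw [monomial_eq, C_1, one_mul, Finsupp.prod]
      refine Finset.prod_congr rfl fun i hi => ?_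
      have h1 : d i = 1 :=
        le_antisymm (hsq i) (Nat.one_le_iff_ne_zero.mpr (Finsupp.mem_support_iff.mp hi))
      rw [h1, pow_one]
    rw [hmono]
    exact Submodule.subset_span (Set.mem_range_self d.support)
  · push_neg at hsq
    obtain ⟨i, hi⟩ := hsq
    set d' := d - Finsupp.single i 2 with hd'
    have hdd : d = Finsupp.single i 2 + d' := by
      ext a
      by_cases ha : a = i
      · subst ha
        simp only [hd', Finsupp.add_apply, Finsupp.tsub_apply, Finsupp.single_eq_same]
        omega
      · simp [hd', Finsupp.single_eq_of_ne' (fun h => ha h.symm)]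
    have hmono : (monomial d 1 : MvPolynomial (Fin n) (ZMod 2)) = X i ^ 2 * monomial d' 1 := by
      rw [X_pow_eq_monomial, monomial_mul, one_mul, ← hdd]
    have hgen : Ideal.Quotient.mk (bottIdeal n c) (X i ^ 2 : MvPolynomial (Fin n) (ZMod 2))
        = Ideal.Quotient.mk (bottIdeal n c)
            (∑ j ∈ Finset.univ.filter (fun j => j < i), C (c j i) * (X i * X j)) := by
      rw [Ideal.Quotient.eq]
      exact Ideal.subset_span ⟨i, rfl⟩
    rw [hmono, map_mul, hgen, ← map_mul, Finset.sum_mul, map_sum]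
    apply Submodule.sum_mem
    intro j hj
    have hji : j.val < i.val := Fin.lt_def.mp (Finset.mem_filter.mp hj).2
    have hX : (X i * X j * monomial d' 1 : MvPolynomial (Fin n) (ZMod 2))
        = monomial (Finsupp.single i 1 + (Finsupp.single j 1 + d')) 1 := by
      rw [← pow_one (X i : MvPolynomial (Fin n) (ZMod 2)),
        ← pow_one (X j : MvPolynomial (Fin n) (ZMod 2)), X_pow_eq_monomial,
        X_pow_eq_monomial, monomial_mul, monomial_mul, one_mul, one_mul, add_assoc]
    have hterm : (C (c j i) * (X i * X j) * monomial d' 1 : MvPolynomial (Fin n) (ZMod 2))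
        = c j i • monomial (Finsupp.single i 1 + (Finsupp.single j 1 + d')) 1 := by
      rw [mul_assoc, hX, ← smul_eq_C_mul]
    rw [hterm, show (Ideal.Quotient.mk (bottIdeal n c))
        (c j i • (monomial (Finsupp.single i 1 + (Finsupp.single j 1 + d')) 1
          : MvPolynomial (Fin n) (ZMod 2)))
        = c j i • (Ideal.Quotient.mk (bottIdeal n c))
            (monomial (Finsupp.single i 1 + (Finsupp.single j 1 + d')) 1) from
      map_smul (Ideal.Quotient.mkₐ (ZMod 2) (bottIdeal n c)) _ _]
    refine Submodule.smul_mem _ _ ?_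
    have hpow : (n + 1) ^ (j : ℕ) < (n + 1) ^ (i : ℕ) :=
      pow_lt_pow_right₀ (by omega) hji
    have h1 : measure n d = 2 * (n + 1) ^ (i : ℕ) + measure n d' := by
      rw [hdd, measure_add, measure_single]
    have h2 : measure n (Finsupp.single i 1 + (Finsupp.single j 1 + d'))
        = 1 * (n + 1) ^ (i : ℕ) + (1 * (n + 1) ^ (j : ℕ) + measure n d') := by
      rw [measure_add, measure_add, measure_single, measure_single]
    exact IH (measure n (Finsupp.single i 1 + (Finsupp.single j 1 + d'))) (by omega) _ le_rfl

end BottAux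

theorem stmt_6 (n : ℕ) (c : Fin n → Fin n → ZMod 2) :
    (∃ b : Module.Basis (Finset (Fin n)) (ZMod 2)
        (MvPolynomial (Fin n) (ZMod 2) ⧸ bottIdeal n c),
      ∀ S : Finset (Fin n),
        b S = Ideal.Quotient.mk (bottIdeal n c) (∏ i ∈ S, X i)) ∧
    Module.finrank (ZMod 2) (MvPolynomial (Fin n) (ZMod 2) ⧸ bottIdeal n c) = 2 ^ n := by
  have hspan : ⊤ ≤ Submodule.span (ZMod 2) (Set.range (BottAux.v n c)) := by
    rintro x -
    obtain ⟨p, rfl⟩ := Ideal.Quotient.mk_surjective x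
    rw [p.as_sum, map_sum]
    refine Submodule.sum_mem _ fun d _ => ?_
    have hm : (monomial d (coeff d p) : MvPolynomial (Fin n) (ZMod 2))
        = coeff d p • monomial d 1 := by
      rw [smul_monomial, smul_eq_mul, mul_one]
    rw [hm, show (Ideal.Quotient.mk (bottIdeal n c))
        (coeff d p • (monomial d 1 : MvPolynomial (Fin n) (ZMod 2)))
        = coeff d p • (Ideal.Quotient.mk (bottIdeal n c)) (monomial d 1) from
      map_smul (Ideal.Quotient.mkₐ (ZMod 2) (bottIdeal n c)) _ _]
    exact Submodule.smul_mem _ _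
      (BottAux.mono_mem n c (BottAux.measure n d) d le_rfl)
  let b : Module.Basis (Finset (Fin n)) (ZMod 2)
      (MvPolynomial (Fin n) (ZMod 2) ⧸ bottIdeal n c) :=
    Module.Basis.mk (BottAux.indep n c) hspan
  constructor
  · exact ⟨b, fun S => Module.Basis.mk_apply _ _ _⟩
  · rw [Module.finrank_eq_card_basis b, Fintype.card_finset, Fintype.card_fin]
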